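/- arXiv:1707.09789 — 2 statements merged into one kernel-verified Lean document; each statement's English description precedes it below -/
import Mathlib

section
/- In the greedy LZ77 parsing of a string, all phrases except possibly the last one are pairwise distinct (as strings). -/
/-- Starting (0-indexed) position of the `i`-th phrase of a parsing. -/
def startPos {α : Type*} (ps : List (List α)) (i : ℕ) : ℕ :=
  ((ps.take i).flatten).length

/-- An LZ77 parsing of `s`: phrases are nonempty, concatenate to `s`, and every
phrase is either a single letter, or its prefix missing the last letter occurs
in `s` starting strictly before the phrase's start. -/
def IsLZ77Parsing {α : Type*} (s : List α) (ps : List (List α)) : Prop :=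
  ps.flatten = s ∧ (∀ p ∈ ps, p ≠ []) ∧
  ∀ i : Fin ps.length, (ps.get i).length = 1 ∨
    (1 < (ps.get i).length ∧
      ∃ j < startPos ps i, (ps.get i).dropLast <+: s.drop j)

/-- A greedy LZ77 parsing: an LZ77 parsing in which every phrase is as long as
possible, i.e. no strictly longer phrase fitting in `s` would be admissible. -/
def IsGreedyLZ77Parsing {α : Type*} (s : List α) (ps : List (List α)) : Prop :=
  IsLZ77Parsing s ps ∧
  ∀ i : Fin ps.length, ∀ L : ℕ, (ps.get i).length < L →
    startPos ps i + L ≤ s.length →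
    ¬ ∃ j < startPos ps i, (s.drop (startPos ps i)).take (L - 1) <+: s.drop j

section
variable {α : Type*}

private lemma drop_startPos' (ps : List (List α)) (i : ℕ) :
    (ps.flatten).drop (startPos ps i) = (ps.drop i).flatten := by
  have e : ps.flatten = (ps.take i).flatten ++ (ps.drop i).flatten := by
    rw [← List.flatten_append, List.take_append_drop]
  rw [e, startPos, List.drop_left]

private lemma startPos_succ' (ps : List (List α)) (i : ℕ) (h : i < ps.length) :
    startPos ps (i+1) = startPos ps i + (ps.get ⟨i, h⟩).length := by
  unfold startPos
  rw [List.take_succ, List.flatten_append, List.length_append]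
  simp [List.getElem?_eq_getElem h]

private lemma startPos_mono' (ps : List (List α)) {i k : ℕ} (h : i ≤ k) :
    startPos ps i ≤ startPos ps k := by
  have h1 : ps.take k = ps.take i ++ ((ps.take k).drop i) := by
    conv_lhs => rw [← List.take_append_drop i (ps.take k)]
    rw [List.take_take, min_eq_left h]
  unfold startPos
  rw [h1, List.flatten_append, List.length_append]
  omega

private lemma drop_startPos_eq (ps : List (List α)) (k : Fin ps.length) :
    (ps.flatten).drop (startPos ps k) = ps.get k ++ (ps.drop (k+1)).flatten := by
  rw [drop_startPos', List.drop_eq_getElem_cons k.isLt, List.flatten_cons]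
  rfl

end

/-- All phrases of a greedy LZ77 parsing, except possibly the last one,
are pairwise distinct. -/
theorem greedy_phrases_distinct {α : Type*} (s : List α) (ps : List (List α))
    (h : IsGreedyLZ77Parsing s ps) :
    ∀ i j : Fin ps.length, (i : ℕ) < ps.length - 1 → (j : ℕ) < ps.length - 1 →
      i ≠ j → ps.get i ≠ ps.get j := by
  obtain ⟨⟨hflat, hne, _⟩, hgreedy⟩ := h
  subst hflat
  have key : ∀ i j : Fin ps.length, (j : ℕ) < ps.length - 1 →
      (i : ℕ) < (j : ℕ) → ps.get i ≠ ps.get j := by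
    intro i j hj hij heq
    set n := (ps.get j).length with hn
    have hdj := drop_startPos_eq ps j
    have hdi := drop_startPos_eq ps i
    have hlt : startPos ps i < startPos ps j := by
      have h1 : startPos ps ((i:ℕ)+1) = startPos ps i + (ps.get i).length :=
        startPos_succ' ps i i.isLt
      have h2 : 0 < (ps.get i).length :=
        List.length_pos_iff.mpr (hne _ (List.get_mem ps i))
      have h3 : startPos ps ((i:ℕ)+1) ≤ startPos ps j := startPos_mono' ps (by omega)
      omega
    have hj1 : (j:ℕ)+1 < ps.length := by omega
    have htail : 1 ≤ ((ps.drop ((j:ℕ)+1)).flatten).length := by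
      rw [List.drop_eq_getElem_cons hj1, List.flatten_cons, List.length_append]
      have h4 : 0 < ps[(j:ℕ)+1].length :=
        List.length_pos_iff.mpr (hne _ (List.getElem_mem hj1))
      omega
    have hlen : startPos ps j + (n+1) ≤ (ps.flatten).length := by
      have h5 : ((ps.flatten).drop (startPos ps j)).length
          = (ps.flatten).length - startPos ps j := List.length_drop
      rw [hdj, List.length_append] at h5
      omega
    refine hgreedy j (n+1) (by omega) hlen ⟨startPos ps i, hlt, ?_⟩
    have htake : ((ps.flatten).drop (startPos ps j)).take ((n+1)-1) = ps.get j := by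
      rw [Nat.add_sub_cancel, hdj, hn]
      exact List.take_left
    rw [htake, hdi, ← heq]
    exact List.prefix_append _ _
  intro i j hi hj hij heq
  rcases lt_or_gt_of_ne (Fin.val_ne_of_ne hij) with hlt | hlt
  · exact key i j hj hlt heq
  · exact key j i hi hlt heq.symm
end

section
/- If a phrase f of an LZ77 parsing of s contains, strictly inside its prefix f[1..|f|−1], an entire phrase f′ of the greedy LZ77 parsing of s as a proper substring (with at least one letter of the greedy parsing before and after f′ inside f[1..|f|−1]), then the greedy parsing is not maximal at f′: the greedy procedure could have chosen a strictly longer phrase in place of f′. Hence this configuration cannot occur. -/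
lemma flatten_split_startPos {α : Type*} (ps : List (List α)) (i : ℕ) :
    (ps.take i).flatten ++ (ps.drop i).flatten = ps.flatten := by
  rw [← List.flatten_append, List.take_append_drop]

lemma drop_flatten_startPos {α : Type*} (ps : List (List α)) (i : Fin ps.length) :
    (ps.flatten).drop (startPos ps i) = (ps.get i) ++ (ps.drop ((i : ℕ) + 1)).flatten := by
  rw [← flatten_split_startPos ps i, startPos, List.drop_left,
    List.drop_eq_getElem_cons i.isLt, List.flatten_cons]
  simp

lemma startPos_add_le {α : Type*} (ps : List (List α)) (i : Fin ps.length) :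
    startPos ps i + (ps.get i).length ≤ ps.flatten.length := by
  have h1 := congrArg List.length (flatten_split_startPos ps i)
  have h2 := congrArg List.length (drop_flatten_startPos ps i)
  simp only [List.length_append, List.length_drop] at h1 h2
  change startPos ps i + _ = _ at h1
  omega

/-- A phrase of the greedy LZ77 parsing cannot lie strictly inside the
copyable prefix $f[1..|f|-1]$ of a phrase $f$ of another LZ77 parsing, with at
least one letter before it and one letter of that prefix after it. -/
theorem no_greedy_phrase_strictly_inside {α : Type*} (s : List α)
    (ps qs : List (List α))
    (hps : IsGreedyLZ77Parsing s ps) (hqs : IsLZ77Parsing s qs)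
    (i : Fin qs.length) (j : Fin ps.length)
    (hleft : startPos qs i + 1 ≤ startPos ps j)
    (hright : startPos ps j + (ps.get j).length + 2 ≤ startPos qs i + (qs.get i).length) :
    False := by
  obtain ⟨⟨hpflat, hpne, _⟩, hgreedy⟩ := hps
  obtain ⟨hqflat, hqne, hqcase⟩ := hqs
  set a := startPos qs i with ha
  set b := startPos ps j with hb
  set m := (qs.get i).length with hm
  set ℓ := (ps.get j).length with hℓ
  have hℓ1 : 1 ≤ ℓ := by
    have hmem : ps.get j ∈ ps := List.get_mem ps j
    have := List.length_pos_iff.mpr (hpne (ps.get j) hmem)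
    omega
  have hm2 : 2 ≤ m := by omega
  have hslen : a + m ≤ s.length := by
    have := startPos_add_le qs i
    rwa [hqflat] at this
  have hf : s.drop a = (qs.get i) ++ (qs.drop ((i : ℕ) + 1)).flatten := by
    rw [← hqflat]; exact drop_flatten_startPos qs i
  rcases hqcase i with h1 | ⟨_, j', hj', hpre⟩
  · omega
  have hdrop : (qs.get i).dropLast = (s.drop a).take (m - 1) := by
    rw [hf, List.take_append_of_le_length (by omega), List.dropLast_eq_take]
  rw [hdrop] at hpre
  refine hgreedy j (ℓ + 2) (by omega) (by omega) ⟨j' + (b - a), by omega, ?_⟩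
  have hdroppre : ((s.drop a).take (m - 1)).drop (b - a) <+: (s.drop j').drop (b - a) := by
    obtain ⟨t, ht⟩ := hpre
    refine ⟨t, ?_⟩
    rw [← ht, List.drop_append_of_le_length]
    simp; omega
  rw [List.drop_take, List.drop_drop, List.drop_drop,
    show a + (b - a) = b by omega] at hdroppre
  have hpp : (s.drop b).take (ℓ + 2 - 1) <+: (s.drop b).take (m - 1 - (b - a)) :=
    List.take_prefix_take_left (by omega)
  exact hpp.trans hdroppre
end
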